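/- Let ⟨·,·⟩ be an inner product on the space of complex polynomials and suppose the multiplication operator D: p(z) ↦ z·p(z) is bounded with operator norm ‖D‖. If φₙ is a polynomial of degree n orthogonal to all polynomials of degree less than n (with respect to this inner product) and z₀ is a zero of φₙ, then |z₀| < ‖D‖. -/

import Mathlib

open Polynomial

/-- If the multiplication operator is bounded with norm `Dn` for an inner
product on complex polynomials, then every zero `z₀` of the `n`-th orthogonal polynomial
satisfies `|z₀| < Dn`. -/
theorem stmt_0 (ip : Polynomial ℂ → Polynomial ℂ → ℂ)
    (hadd : ∀ p q r : Polynomial ℂ, ip (p + q) r = ip p r + ip q r)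
    (hsmul : ∀ (a : ℂ) (p q : Polynomial ℂ), ip (a • p) q = a * ip p q)
    (hsymm : ∀ p q : Polynomial ℂ, ip q p = (starRingEnd ℂ) (ip p q))
    (hdef : ∀ p : Polynomial ℂ, p ≠ 0 → 0 < (ip p p).re)
    (Dn : ℝ) (hDn : 0 ≤ Dn)
    (hbound : ∀ p : Polynomial ℂ, (ip (X * p) (X * p)).re ≤ Dn ^ 2 * (ip p p).re)
    (n : ℕ) (φ : Polynomial ℂ) (hφ : φ ≠ 0) (hdeg : φ.natDegree = n)
    (horth : ∀ q : Polynomial ℂ, q.degree < n → ip φ q = 0)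
    (z₀ : ℂ) (hz₀ : φ.eval z₀ = 0) :
    ‖z₀‖ < Dn := by
  -- n ≠ 0
  rcases Nat.eq_zero_or_pos n with hn0 | hn
  · exfalso
    have hc := Polynomial.eq_C_of_natDegree_eq_zero (hdeg.trans hn0)
    rw [hc] at hz₀
    simp at hz₀
    rw [hc, hz₀] at hφ
    simp at hφ
  -- factor φ = (X - C z₀) * q
  set q : Polynomial ℂ := φ /ₘ (X - C z₀) with hq
  have hmonic : (X - C z₀).Monic := monic_X_sub_C z₀
  have hfac : (X - C z₀) * q = φ := by
    rw [hq, mul_divByMonic_eq_iff_isRoot]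
    exact hz₀
  have hqne : q ≠ 0 := by
    intro h
    rw [h, mul_zero] at hfac
    exact hφ hfac.symm
  have hdegq : q.degree < (n : WithBot ℕ) := by
    have := Polynomial.degree_divByMonic_lt φ (X - C z₀) hφ (by
      rw [degree_X_sub_C]; exact zero_lt_one)
    rw [← hq] at this
    calc q.degree < φ.degree := this
      _ ≤ (n : WithBot ℕ) := by rw [← hdeg]; exact degree_le_natDegree
  have horthq : ip φ q = 0 := horth q hdegq
  have horthq' : ip q φ = 0 := by rw [hsymm, horthq]; simp
  -- additivity/smul in second argument
  have hadd2 : ∀ p r s : Polynomial ℂ, ip p (r + s) = ip p r + ip p s := by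
    intro p r s
    rw [hsymm (r + s) p, hadd, map_add, ← hsymm, ← hsymm]
  have hsmul2 : ∀ (a : ℂ) (p r : Polynomial ℂ),
      ip p (a • r) = (starRingEnd ℂ) a * ip p r := by
    intro a p r
    rw [hsymm (a • r) p, hsmul, map_mul, ← hsymm]
  -- X * q = φ + z₀ • q
  have hXq : X * q = φ + z₀ • q := by
    rw [← hfac, smul_eq_C_mul]; ring
  have hexp : ip (X * q) (X * q) = ip φ φ + (z₀ * (starRingEnd ℂ) z₀) * ip q q := by
    rw [hXq, hadd, hadd2, hadd2, hsmul, hsmul2, hsmul2, hsmul, horthq, horthq']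
    ring
  have hre : (ip (X * q) (X * q)).re
      = (ip φ φ).re + (‖z₀‖) ^ 2 * (ip q q).re := by
    rw [hexp]
    have : z₀ * (starRingEnd ℂ) z₀ = ((‖z₀‖ : ℝ) ^ 2 : ℝ) := by
      rw [Complex.mul_conj, Complex.normSq_eq_norm_sq]
    rw [this]
    simp [Complex.add_re, Complex.re_ofReal_mul, ← Complex.ofReal_pow]
  have hb := hbound q
  rw [hre] at hb
  have hqq : 0 < (ip q q).re := hdef q hqne
  have hφφ : 0 < (ip φ φ).re := hdef φ hφ
  have hlt : (‖z₀‖) ^ 2 * (ip q q).re < Dn ^ 2 * (ip q q).re := by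
    linarith
  have h2 : (‖z₀‖) ^ 2 < Dn ^ 2 :=
    lt_of_mul_lt_mul_right hlt hqq.le
  exact lt_of_pow_lt_pow_left₀ 2 hDn h2
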